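/- Let q_1, …, q_r be distinct primes. For every point (x, y_1, …, y_r) ∈ ℝ × ℚ_{q_1} × ⋯ × ℚ_{q_r} there exists a unique rational number m ∈ ℤ^S such that x − m ∈ [0, 1) and ‖y_i − m‖_{q_i} ≤ 1 for every i = 1, …, r (where m is viewed in ℚ_{q_i} via the canonical embedding ℚ → ℚ_{q_i}). Equivalently, [0,1) × ℤ_{q_1} × ⋯ × ℤ_{q_r} is a fundamental domain for the additive action on ℚ_S of the diagonally embedded ℤ^S. -/

import Mathlib

lemma exists_sInt_part (p : ℕ) [hp : Fact p.Prime] (y : ℚ_[p]) :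
    ∃ s : ℚ, (∀ p' : ℕ, p'.Prime → p' ≠ p → padicNorm p' s ≤ 1) ∧ ‖y - (s : ℚ_[p])‖ ≤ 1 := by
  obtain ⟨r0, hr0⟩ := Padic.rat_dense (p := p) y one_pos
  set n := r0.den with hn
  have hn0 : n ≠ 0 := r0.den_nz
  set a : ℕ := p ^ n.factorization p with ha
  set c : ℕ := n / a with hc
  have hac : a * c = n := Nat.ordProj_mul_ordCompl_eq_self n p
  have hpc : ¬ p ∣ c := Nat.not_dvd_ordCompl hp.out hn0
  have hcop : Nat.Coprime a c :=
    Nat.Coprime.pow_left _ (Nat.coprime_ordCompl hp.out hn0)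
  obtain ⟨u, v, huv⟩ := Nat.isCoprime_iff_coprime.mpr hcop
  have ha0 : (a : ℚ) ≠ 0 := by
    have : a ≠ 0 := pow_ne_zero _ hp.out.ne_zero
    exact_mod_cast this
  have hc0 : (c : ℚ) ≠ 0 := by
    have : c ≠ 0 := by
      intro h
      rw [h, Nat.mul_zero] at hac
      exact hn0 hac.symm
    exact_mod_cast this
  set s : ℚ := ((r0.num * v : ℤ) : ℚ) / (a : ℚ) with hs
  have key : r0 - s = ((r0.num * u : ℤ) : ℚ) / (c : ℚ) := by
    have hnq : (a : ℚ) * (c : ℚ) = (n : ℚ) := by exact_mod_cast hac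
    have huvq : (u : ℚ) * a + (v : ℚ) * c = 1 := by exact_mod_cast huv
    have key2 : s + ((r0.num * u : ℤ) : ℚ) / (c : ℚ) = r0 := by
      rw [hs, div_add_div _ _ ha0 hc0]
      push_cast
      rw [show (r0.num : ℚ) * v * c + (a : ℚ) * ((r0.num : ℚ) * u)
            = (r0.num : ℚ) * ((u : ℚ) * a + (v : ℚ) * c) by ring, huvq, mul_one, hnq]
      exact Rat.num_div_den r0
    linarith [key2]
  refine ⟨s, ?_, ?_⟩
  · intro p' hp' hne
    haveI : Fact p'.Prime := ⟨hp'⟩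
    rw [hs, padicNorm.div]
    have h1 : padicNorm p' ((r0.num * v : ℤ) : ℚ) ≤ 1 := padicNorm.of_int _
    have h2 : padicNorm p' ((a : ℕ) : ℚ) = 1 := by
      rw [padicNorm.nat_eq_one_iff]
      intro hdvd
      exact hne ((Nat.prime_dvd_prime_iff_eq hp' hp.out).mp (hp'.dvd_of_dvd_pow hdvd))
    rw [h2, div_one]
    exact h1
  · have h3 : ‖((r0 - s : ℚ) : ℚ_[p])‖ ≤ 1 := by
      rw [Padic.eq_padicNorm, key, padicNorm.div]
      have h1 : padicNorm p ((r0.num * u : ℤ) : ℚ) ≤ 1 := padicNorm.of_int _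
      have h2 : padicNorm p ((c : ℕ) : ℚ) = 1 := (padicNorm.nat_eq_one_iff _).mpr hpc
      rw [h2, div_one]; exact_mod_cast h1
    calc ‖y - (s : ℚ_[p])‖
        = ‖(y - (r0 : ℚ_[p])) + ((r0 - s : ℚ) : ℚ_[p])‖ := by push_cast; ring_nf
      _ ≤ max ‖y - (r0 : ℚ_[p])‖ ‖((r0 - s : ℚ) : ℚ_[p])‖ := Padic.nonarchimedean _ _
      _ ≤ 1 := max_le (le_of_lt hr0) h3

lemma den_eq_one_of_padicNorm_le (d : ℚ) (h : ∀ p : ℕ, p.Prime → padicNorm p d ≤ 1) :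
    d.den = 1 := by
  by_contra hden
  obtain ⟨p, hp, hdvd⟩ := Nat.exists_prime_and_dvd hden
  haveI : Fact p.Prime := ⟨hp⟩
  have hd0 : d ≠ 0 := by
    rintro rfl
    exact hden rfl
  have hnum : ¬ (p : ℤ) ∣ d.num := by
    intro hdvd'
    have h1 : p ∣ d.num.natAbs := Int.ofNat_dvd_left.mp hdvd'
    have := Nat.Coprime.eq_one_of_dvd (Nat.Coprime.coprime_dvd_left h1 d.reduced) hdvd
    exact hp.ne_one this
  have hval : padicValRat p d ≤ -1 := by
    rw [padicValRat_def, padicValInt.eq_zero_of_not_dvd hnum]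
    have : 1 ≤ padicValNat p d.den :=
      one_le_padicValNat_of_dvd d.den_nz hdvd
    omega
  have hlt : (1 : ℚ) < padicNorm p d := by
    rw [padicNorm.eq_zpow_of_nonzero hd0]
    have hp1 : (1 : ℚ) < p := by exact_mod_cast hp.one_lt
    calc (1 : ℚ) < (p : ℚ) ^ (1 : ℤ) := by simpa using hp1
      _ ≤ (p : ℚ) ^ (-padicValRat p d) := by
          apply zpow_le_zpow_right₀ (le_of_lt hp1)
          omega
  exact absurd (h p hp) (not_le.mpr hlt)

lemma padic_norm_sub_le_max {p : ℕ} [Fact p.Prime] (a b : ℚ_[p]) :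
    ‖a - b‖ ≤ max ‖a‖ ‖b‖ := by
  rw [sub_eq_add_neg]
  simpa [norm_neg] using Padic.nonarchimedean a (-b)



/-- `[0,1) × ℤ_{q_1} × ⋯ × ℤ_{q_r}` is a fundamental domain for the diagonally embedded
ring of `S`-integers `ℤ^S` acting additively on `ℚ_S = ℝ × ℚ_{q_1} × ⋯ × ℚ_{q_r}`. -/
theorem stmt9 (r : ℕ) (q : Fin r → ℕ) [hq : ∀ i, Fact (Nat.Prime (q i))]
    (hinj : Function.Injective q)
    (x : ℝ) (y : ∀ i, ℚ_[q i]) :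
    ∃! m : ℚ,
      (∀ p : ℕ, p.Prime → (∀ i, q i ≠ p) → padicNorm p m ≤ 1) ∧
      x - (m : ℝ) ∈ Set.Ico (0:ℝ) 1 ∧
      ∀ i, ‖y i - (m : ℚ_[q i])‖ ≤ 1 := by
  classical
  choose s hs1 hs2 using fun i => exists_sInt_part (q i) (y i)
  set m0 : ℚ := ∑ i, s i with hm0
  set N : ℤ := ⌊x - (m0 : ℝ)⌋ with hN
  set m : ℚ := m0 + N with hm
  -- the norm of any s j at a prime p ≠ q j is ≤ 1
  have hsj : ∀ (p : ℕ) [Fact p.Prime] (j : Fin r), p ≠ q j → ‖((s j : ℚ) : ℚ_[p])‖ ≤ 1 := by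
    intro p hp j hne
    rw [Padic.eq_padicNorm]
    exact_mod_cast hs1 j p hp.out hne
  -- condition at primes outside S
  have hB : ∀ p : ℕ, p.Prime → (∀ i, q i ≠ p) → padicNorm p m ≤ 1 := by
    intro p hp hne
    haveI : Fact p.Prime := ⟨hp⟩
    have key : ‖((m : ℚ) : ℚ_[p])‖ ≤ 1 := by
      have hcast : ((m : ℚ) : ℚ_[p]) = (∑ j, ((s j : ℚ) : ℚ_[p])) + (N : ℚ_[p]) := by
        rw [hm, hm0]; push_cast; ring
      rw [hcast]
      refine le_trans (Padic.nonarchimedean _ _) (max_le ?_ (Padic.norm_int_le_one _))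
      exact IsUltrametricDist.norm_sum_le_of_forall_le_of_nonneg zero_le_one
        (fun j _ => hsj p j (fun h => hne j h.symm))
    rw [Padic.eq_padicNorm] at key
    exact_mod_cast key
  -- condition at the real place
  have hC : x - (m : ℝ) ∈ Set.Ico (0:ℝ) 1 := by
    have : x - (m : ℝ) = Int.fract (x - (m0 : ℝ)) := by
      rw [Int.fract, hm]; push_cast; ring
    rw [this]
    exact ⟨Int.fract_nonneg _, Int.fract_lt_one _⟩
  -- condition at the primes in S
  have hA : ∀ i, ‖y i - ((m : ℚ) : ℚ_[q i])‖ ≤ 1 := by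
    intro i
    have hsplit : y i - ((m : ℚ) : ℚ_[q i])
        = (y i - ((s i : ℚ) : ℚ_[q i]))
          - ((∑ j ∈ Finset.univ.erase i, ((s j : ℚ) : ℚ_[q i])) + (N : ℚ_[q i])) := by
      rw [hm, hm0, ← Finset.add_sum_erase _ _ (Finset.mem_univ i)]
      push_cast
      ring
    rw [hsplit]
    refine le_trans (padic_norm_sub_le_max _ _) (max_le (hs2 i) ?_)
    refine le_trans (Padic.nonarchimedean _ _) (max_le ?_ (Padic.norm_int_le_one _))
    refine IsUltrametricDist.norm_sum_le_of_forall_le_of_nonneg zero_le_one (fun j hj => ?_)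
    exact hsj (q i) j (fun h => (Finset.mem_erase.mp hj).1 (hinj h.symm))
  refine ⟨m, ⟨hB, hC, hA⟩, ?_⟩
  rintro m₂ ⟨h1, h2, h3⟩
  -- uniqueness
  have hall : ∀ p : ℕ, p.Prime → padicNorm p (m₂ - m) ≤ 1 := by
    intro p hp
    haveI : Fact p.Prime := ⟨hp⟩
    by_cases hex : ∃ i, q i = p
    · obtain ⟨i, rfl⟩ := hex
      haveI := hq i
      have hcast : ((m₂ - m : ℚ) : ℚ_[q i]) = (y i - ((m : ℚ) : ℚ_[q i])) - (y i - ((m₂ : ℚ) : ℚ_[q i])) := by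
        push_cast; ring
      have key : ‖((m₂ - m : ℚ) : ℚ_[q i])‖ ≤ 1 := by
        rw [hcast]
        exact le_trans (padic_norm_sub_le_max _ _) (max_le (hA i) (h3 i))
      rw [Padic.eq_padicNorm] at key
      exact_mod_cast key
    · push_neg at hex
      exact le_trans padicNorm.sub (max_le (h1 p hp hex) (hB p hp hex))
  have hden : (m₂ - m).den = 1 := den_eq_one_of_padicNorm_le _ hall
  have hnum : ((m₂ - m).num : ℚ) = m₂ - m := (Rat.den_eq_one_iff _).mp hden
  have habs : |((m₂ - m : ℚ) : ℝ)| < 1 := by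
    have he : ((m₂ - m : ℚ) : ℝ) = (x - (m : ℝ)) - (x - (m₂ : ℝ)) := by push_cast; ring
    rw [abs_lt, he]
    obtain ⟨ha1, ha2⟩ := hC
    obtain ⟨hb1, hb2⟩ := h2
    constructor <;> linarith
  have hz : (m₂ - m).num = 0 := by
    have : |((m₂ - m).num : ℝ)| < 1 := by rw [← hnum] at habs; exact_mod_cast habs
    have h' : |(m₂ - m).num| < 1 := by exact_mod_cast this
    exact Int.abs_lt_one_iff.mp h'
  have : m₂ - m = 0 := by rw [← hnum, hz]; simp
  linarith [this]
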